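/- Contractions are dense among nonexpansive mappings: for every nonexpansive map T : X → X and every ε > 0 there exist l ∈ [0, 1) and a map T₁ : X → X that is a contraction with modulus l and satisfies ρ(T, T₁) < ε. -/

import Mathlib

open RealInnerProductSpace Filter

variable {X : Type*} [NormedAddCommGroup X] [InnerProductSpace ℝ X] [CompleteSpace X]

/-- `T` is nonexpansive. -/
def Nonexpansive (T : X → X) : Prop := ∀ x y : X, ‖T x - T y‖ ≤ ‖x - y‖

/-- `T` is firmly nonexpansive. -/
def FirmlyNonexpansive (T : X → X) : Prop :=
  ∀ x y : X, ‖T x - T y‖ ^ 2 ≤ ⟪x - y, T x - T y⟫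

/-- `‖T₁ - T₂‖ₙ = sup_{‖x‖ ≤ n} ‖T₁ x - T₂ x‖`. -/
noncomputable def ballSup (T₁ T₂ : X → X) (n : ℕ) : ℝ :=
  sSup {r : ℝ | ∃ x : X, ‖x‖ ≤ (n : ℝ) ∧ r = ‖T₁ x - T₂ x‖}

/-- The metric `ρ` on nonexpansive maps. -/
noncomputable def rho (T₁ T₂ : X → X) : ℝ :=
  ∑' n : ℕ, (1 / 2 ^ (n + 1)) *
    (ballSup T₁ T₂ (n + 1) / (1 + ballSup T₁ T₂ (n + 1)))

/-- The metric `ρ̂` on firmly nonexpansive maps: `ρ̂(T₁,T₂) = ρ(2T₁ - Id, 2T₂ - Id)`. -/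
noncomputable def rhoHat (T₁ T₂ : X → X) : ℝ :=
  rho (fun x => (2 : ℝ) • T₁ x - x) (fun x => (2 : ℝ) • T₂ x - x)

/-- `T` is super-regular with limit point `xT`. -/
def SuperRegularAt (T : X → X) (xT : X) : Prop :=
  ∀ s : ℝ, 0 < s → ∀ ε : ℝ, 0 < ε → ∃ N : ℕ, ∀ n ≥ N, ∀ x : X, ‖x‖ ≤ s → ‖T^[n] x - xT‖ < ε

/-- `T` is super-regular. -/
def SuperRegular (T : X → X) : Prop := ∃ xT : X, SuperRegularAt T xT

/-- `T` is a (Banach) contraction. -/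
def Contraction (T : X → X) : Prop :=
  ∃ l : ℝ, 0 ≤ l ∧ l < 1 ∧ ∀ x y : X, ‖T x - T y‖ ≤ l * ‖x - y‖

/-- contractions are `ρ`-dense in `N(X)`. -/
theorem contractions_dense (T : X → X) (hT : Nonexpansive T) (ε : ℝ) (hε : 0 < ε) :
    ∃ (l : ℝ) (T₁ : X → X), 0 ≤ l ∧ l < 1 ∧
      (∀ x y : X, ‖T₁ x - T₁ y‖ ≤ l * ‖x - y‖) ∧ rho T T₁ < ε := by
  set c : ℝ := ‖T 0‖ + 1 with hc
  have hc0 : (0 : ℝ) < c := by positivity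
  set δ : ℝ := min (1/2 : ℝ) (ε / (4 * c)) with hδ
  have hδ0 : 0 < δ := lt_min (by norm_num) (by positivity)
  have hδhalf : δ ≤ 1/2 := min_le_left _ _
  set T₁ : X → X := fun x => (1 - δ) • T x with hT₁
  refine ⟨1 - δ, T₁, by linarith, by linarith, ?_, ?_⟩
  · intro x y
    have h1 : T₁ x - T₁ y = (1 - δ) • (T x - T y) := (smul_sub _ _ _).symm
    rw [h1, norm_smul, Real.norm_eq_abs, abs_of_nonneg (by linarith)]
    exact mul_le_mul_of_nonneg_left (hT x y) (by linarith)
  · -- bound on ballSup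
    have hTx : ∀ x : X, ‖T x‖ ≤ ‖x‖ + ‖T 0‖ := by
      intro x
      calc ‖T x‖ = ‖(T x - T 0) + T 0‖ := by rw [sub_add_cancel]
        _ ≤ ‖T x - T 0‖ + ‖T 0‖ := norm_add_le _ _
        _ ≤ ‖x - 0‖ + ‖T 0‖ := by linarith [hT x 0]
        _ = ‖x‖ + ‖T 0‖ := by rw [sub_zero]
    have hbound : ∀ n : ℕ, ballSup T T₁ (n + 1) ≤ δ * c * (n + 1) := by
      intro n
      apply Real.sSup_le
      · rintro r ⟨x, hx, rfl⟩
        have h1 : T x - T₁ x = δ • T x := by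
          show T x - (1 - δ) • T x = δ • T x
          rw [sub_smul, one_smul]
          abel
        rw [h1, norm_smul, Real.norm_eq_abs, abs_of_pos hδ0]
        have h2 : ‖T x‖ ≤ ((n : ℝ) + 1) + ‖T 0‖ := by
          have := hTx x
          push_cast at hx
          linarith
        have h3 : ((n : ℝ) + 1) + ‖T 0‖ ≤ c * (n + 1) := by
          have hn : (1 : ℝ) ≤ (n : ℝ) + 1 := le_add_of_nonneg_left (Nat.cast_nonneg n)
          have h0 : (0 : ℝ) ≤ ‖T 0‖ := norm_nonneg _
          rw [hc]; nlinarith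
        nlinarith
      · exact mul_nonneg (mul_nonneg hδ0.le hc0.le) (by positivity)
    have hnn : ∀ n : ℕ, 0 ≤ ballSup T T₁ (n + 1) := by
      intro n
      apply Real.sSup_nonneg
      rintro r ⟨x, hx, rfl⟩
      exact norm_nonneg _
    -- summands
    set f : ℕ → ℝ := fun n => (1 / 2 ^ (n + 1)) *
      (ballSup T T₁ (n + 1) / (1 + ballSup T T₁ (n + 1))) with hf
    set g : ℕ → ℝ := fun n => (δ * c) * (((n : ℝ) + 1) * (1/2) ^ (n + 1)) with hg
    have hf0 : ∀ n, 0 ≤ f n := by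
      intro n
      have := hnn n
      apply mul_nonneg (by positivity)
      apply div_nonneg this (by linarith)
    have hfg : ∀ n, f n ≤ g n := by
      intro n
      have hs := hnn n
      have hb := hbound n
      have h1 : ballSup T T₁ (n + 1) / (1 + ballSup T T₁ (n + 1)) ≤ ballSup T T₁ (n + 1) := by
        rw [div_le_iff₀ (by linarith)]
        nlinarith
      have h2 : f n ≤ (1 / 2 ^ (n + 1)) * (δ * c * ((n : ℝ) + 1)) := by
        show (1 / 2 ^ (n + 1)) * (ballSup T T₁ (n + 1) / (1 + ballSup T T₁ (n + 1))) ≤ _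
        apply mul_le_mul_of_nonneg_left _ (by positivity)
        exact h1.trans hb
      calc f n ≤ (1 / 2 ^ (n + 1)) * (δ * c * ((n : ℝ) + 1)) := h2
        _ = g n := by
            show _ = δ * c * (((n : ℝ) + 1) * (1/2) ^ (n + 1))
            rw [show ((1:ℝ)/2) ^ (n + 1) = 1 / 2 ^ (n + 1) by rw [div_pow, one_pow]]
            ring
    have h1 : HasSum (fun n : ℕ => (n : ℝ) * (1/2) ^ n) 2 := by
      have := hasSum_coe_mul_geometric_of_norm_lt_one (r := (1/2 : ℝ)) (by norm_num)
      convert this using 1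
      all_goals norm_num
      all_goals rfl
    have h2 : HasSum (fun n : ℕ => ((1 : ℝ)/2) ^ n) 2 := by
      have := hasSum_geometric_of_lt_one (r := (1/2 : ℝ)) (by norm_num) (by norm_num)
      convert this using 1
      norm_num
    have h3 : HasSum (fun n : ℕ => ((n : ℝ) + 1) * (1/2) ^ (n + 1)) 2 := by
      have h := (h1.mul_left (1/2)).add (h2.mul_left (1/2))
      have heq : (fun n : ℕ => ((n : ℝ) + 1) * (1/2) ^ (n + 1)) =
          fun n : ℕ => 1/2 * ((n : ℝ) * (1/2) ^ n) + 1/2 * ((1/2 : ℝ) ^ n) := by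
        funext n
        rw [pow_succ]
        ring
      rw [heq]
      convert h using 1
      all_goals norm_num
      all_goals rfl
    have hgsum : HasSum g (δ * c * 2) := by
      have := h3.mul_left (δ * c)
      convert this using 1
    have hfsum : Summable f := Summable.of_nonneg_of_le hf0 hfg hgsum.summable
    have hle : rho T T₁ ≤ δ * c * 2 := by
      rw [show rho T T₁ = ∑' n, f n from rfl, ← hgsum.tsum_eq]
      exact Summable.tsum_le_tsum hfg hfsum hgsum.summable
    have hδc : δ * c * 2 ≤ ε / 2 := by
      have h4 : δ ≤ ε / (4 * c) := min_le_right _ _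
      rw [le_div_iff₀ (by linarith : (0:ℝ) < 4 * c)] at h4
      nlinarith
    exact lt_of_le_of_lt (hle.trans hδc) (half_lt_self hε)
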